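/- Fix n ≥ 1 and m ≥ 1, and let d_{n,m} be the number of descents of the random permutation produced by an m-shelf shuffle of n cards. Then there exists, on the same probability space, a random variable B_{n,m} with the Binomial(n, 1/2) distribution such that |d_{n,m} − B_{n,m}| ≤ 4m − 1 almost surely. -/

import Mathlib

open MeasureTheory ProbabilityTheory Finset Filter

/-- The uniform probability measure on a finite type. -/
noncomputable def uniformM (α : Type*) [Fintype α] [MeasurableSpace α] : Measure α :=
  ((Fintype.card α : ENNReal))⁻¹ • Measure.count

/-- The pile label (in `{1, …, 2m}`) of card `i` under the pile assignment `w`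
(pile indices in `Fin (2*m)` are 0-based, so pile `k` carries label `k + 1`).
Under the uniform measure on words, `fun w => Xval w i` are i.i.d. uniform on `{1, …, 2m}`. -/
def Xval {m n : ℕ} (w : Fin n → Fin (2*m)) (i : Fin n) : ℕ := (w i : ℕ) + 1

/-- Sorting key of card `i` in an `m`-shelf shuffle with pile assignment `w`:
cards are ordered first by pile label; within an odd-labeled pile they keep their
increasing order, and within an even-labeled pile their order is reversed. -/
noncomputable def shelfKey {m n : ℕ} (w : Fin n → Fin (2*m)) (i : Fin n) :
    Lex (Fin (2*m) × ℤ) :=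
  toLex (w i, if Even (Xval w i) then -(i : ℤ) else (i : ℤ))

/-- The permutation of `{1, …, n}` (0-based: of `Fin n`) produced by an `m`-shelf shuffle
with pile assignment `w`: position `p` of the shuffled deck holds card `shelfPerm w p`. -/
noncomputable def shelfPerm {m n : ℕ} (w : Fin n → Fin (2*m)) : Equiv.Perm (Fin n) :=
  Tuple.sort (shelfKey w)

/-- The number of inversions of a permutation: pairs `i < j` with `π i > π j`. -/
def invCount {n : ℕ} (π : Equiv.Perm (Fin n)) : ℕ :=
  ((Finset.univ : Finset (Fin n × Fin n)).filter
    (fun p => p.1 < p.2 ∧ π p.2 < π p.1)).card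

/-- `I_{n,m}`: the number of inversions after an `m`-shelf shuffle of `n` cards,
as a random variable on the space of pile-assignment words. -/
noncomputable def shelfInv (m n : ℕ) (w : Fin n → Fin (2*m)) : ℕ := invCount (shelfPerm w)

/-- The number of descents of a permutation: indices `i` with `π i > π (i+1)`. -/
def desCount {n : ℕ} (π : Equiv.Perm (Fin n)) : ℕ :=
  ((Finset.univ : Finset (Fin n × Fin n)).filter
    (fun p => (p.1 : ℕ) + 1 = (p.2 : ℕ) ∧ π p.2 < π p.1)).card

/-- `d_{n,m}`: the number of descents after an `m`-shelf shuffle of `n` cards,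
as a random variable on the space of pile-assignment words. -/
noncomputable def shelfDes (m n : ℕ) (w : Fin n → Fin (2*m)) : ℕ := desCount (shelfPerm w)


lemma card_odd_fin (m : ℕ) :
    ((univ : Finset (Fin (2*m))).filter (fun v : Fin (2*m) => Odd (v:ℕ))).card = m := by
  have h : ((univ : Finset (Fin (2*m))).filter (fun v : Fin (2*m) => Odd (v:ℕ))).card
      = (univ : Finset (Fin m)).card := by
    refine Finset.card_bij' (fun (v : Fin (2*m)) (_ : v ∈ _) => (⟨(v:ℕ)/2, by have := v.isLt; omega⟩ : Fin m))
        (fun (j : Fin m) (_ : j ∈ _) => (⟨2*(j:ℕ)+1, by have := j.isLt; omega⟩ : Fin (2*m)))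
        ?_ ?_ ?_ ?_
    · intros; exact mem_univ _
    · intro j _
      simp only [mem_filter, mem_univ, true_and]
      exact ⟨(j:ℕ), by omega⟩
    · intro v hv
      simp only [mem_filter, mem_univ, true_and] at hv
      obtain ⟨c, hc⟩ := hv
      ext; simp; omega
    · intro j _; ext; simp; omega
  simpa using h

lemma card_even_fin (m : ℕ) :
    ((univ : Finset (Fin (2*m))).filter (fun v : Fin (2*m) => ¬ Odd (v:ℕ))).card = m := by
  have h1 := Finset.card_filter_add_card_filter_not
    (s := (univ : Finset (Fin (2*m)))) (p := fun v : Fin (2*m) => Odd (v:ℕ))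
  have h2 := card_odd_fin m
  simp only [Finset.card_univ, Fintype.card_fin] at h1
  omega


lemma count_words (n m k : ℕ) :
    ((univ : Finset (Fin n → Fin (2*m))).filter
      (fun w => ((univ : Finset (Fin n)).filter (fun i => Odd ((w i : ℕ)))).card = k)).card
      = n.choose k * m ^ n := by
  classical
  rw [Finset.card_eq_sum_card_fiberwise
      (f := fun w : Fin n → Fin (2*m) => (univ : Finset (Fin n)).filter (fun i => Odd ((w i : ℕ))))
      (t := Finset.powersetCard k univ)
      (fun w hw => Finset.mem_powersetCard.mpr ⟨Finset.subset_univ _, (Finset.mem_filter.mp hw).2⟩)]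
  have hfib : ∀ S ∈ Finset.powersetCard k (univ : Finset (Fin n)),
      (((univ : Finset (Fin n → Fin (2*m))).filter
        (fun w => ((univ : Finset (Fin n)).filter (fun i => Odd ((w i : ℕ)))).card = k)).filter
        (fun w => (univ : Finset (Fin n)).filter (fun i => Odd ((w i : ℕ))) = S)).card = m ^ n := by
    intro S hS
    have hSk : S.card = k := (Finset.mem_powersetCard.mp hS).2
    have heq : (((univ : Finset (Fin n → Fin (2*m))).filter
        (fun w => ((univ : Finset (Fin n)).filter (fun i => Odd ((w i : ℕ)))).card = k)).filter
        (fun w => (univ : Finset (Fin n)).filter (fun i => Odd ((w i : ℕ))) = S))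
        = Fintype.piFinset (fun i => (univ : Finset (Fin (2*m))).filter
            (fun v : Fin (2*m) => (Odd (v:ℕ) ↔ i ∈ S))) := by
      ext w
      simp only [Finset.mem_filter, Finset.mem_univ, true_and, Fintype.mem_piFinset]
      constructor
      · rintro ⟨-, h2⟩ i
        rw [Finset.ext_iff] at h2
        have := h2 i
        simpa using this
      · intro h
        have h2 : (univ : Finset (Fin n)).filter (fun i => Odd ((w i : ℕ))) = S := by
          ext i; simpa using h i
        exact ⟨by rw [h2, hSk], h2⟩
    rw [heq, Fintype.card_piFinset]
    have hone : ∀ i : Fin n, ((univ : Finset (Fin (2*m))).filter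
        (fun v : Fin (2*m) => (Odd (v:ℕ) ↔ i ∈ S))).card = m := by
      intro i
      by_cases hi : i ∈ S
      · rw [show ((univ : Finset (Fin (2*m))).filter (fun v : Fin (2*m) => (Odd (v:ℕ) ↔ i ∈ S)))
            = ((univ : Finset (Fin (2*m))).filter (fun v : Fin (2*m) => Odd (v:ℕ))) from
            Finset.filter_congr (fun v _ => by simp [hi])]
        exact card_odd_fin m
      · rw [show ((univ : Finset (Fin (2*m))).filter (fun v : Fin (2*m) => (Odd (v:ℕ) ↔ i ∈ S)))
            = ((univ : Finset (Fin (2*m))).filter (fun v : Fin (2*m) => ¬ Odd (v:ℕ))) from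
            Finset.filter_congr (fun v _ => by simp [hi])]
        exact card_even_fin m
    simp only [hone]
    simp [Finset.prod_const]
  rw [Finset.sum_congr rfl hfib]
  simp [Finset.card_powersetCard]

lemma shelfKey_injective {m n : ℕ} (w : Fin n → Fin (2*m)) :
    Function.Injective (shelfKey w) := by
  intro i j h
  simp only [shelfKey] at h
  have h' := toLex.injective h
  rw [Prod.mk.injEq] at h'
  obtain ⟨h1, h2⟩ := h'
  have hx : Xval w i = Xval w j := by simp [Xval, h1]
  rw [← hx] at h2
  split_ifs at h2 <;> exact Fin.ext (by omega)

lemma shelf_des_close (m n : ℕ) (hm : 1 ≤ m) (w : Fin n → Fin (2*m)) :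
    |(shelfDes m n w : ℤ)
      - (((univ : Finset (Fin n)).filter (fun i => Odd ((w i : ℕ)))).card : ℤ)|
      ≤ 4 * (m : ℤ) - 1 := by
  classical
  set π := shelfPerm w with hπdef
  have hmono : Monotone (shelfKey w ∘ π) := Tuple.monotone_sort (shelfKey w)
  have hsm : StrictMono (shelfKey w ∘ π) :=
    hmono.strictMono_of_injective ((shelfKey_injective w).comp π.injective)
  have hwle : ∀ p q : Fin n, p ≤ q → w (π p) ≤ w (π q) := by
    intro p q hpq
    have h := hmono hpq
    simp only [Function.comp_apply, shelfKey, Prod.Lex.le_iff] at h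
    rcases h with h | h
    · exact h.le
    · exact h.1.le
  have hsame : ∀ p q : Fin n, p < q → w (π p) = w (π q) →
      (π q < π p ↔ Odd ((w (π p) : ℕ))) := by
    intro p q hpq heq
    have h := hsm hpq
    simp only [Function.comp_apply, shelfKey, Prod.Lex.lt_iff] at h
    rcases h with h | h
    · rw [heq] at h; exact absurd h (lt_irrefl _)
    · obtain ⟨-, h2⟩ := h
      have hx : Xval w (π p) = Xval w (π q) := by simp [Xval, heq]
      rw [← hx] at h2
      by_cases he : Even (Xval w (π p))
      · rw [if_pos he, if_pos he] at h2
        have hlt : π q < π p := by rw [Fin.lt_def]; simp only [ofLex_toLex] at h2; omega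
        have hodd : Odd ((w (π p) : ℕ)) := by
          simpa [Xval, Nat.even_add_one, Nat.not_even_iff_odd] using he
        exact iff_of_true hlt hodd
      · rw [if_neg he, if_neg he] at h2
        have hlt : π p < π q := by rw [Fin.lt_def]; simp only [ofLex_toLex] at h2; omega
        have hnodd : ¬ Odd ((w (π p) : ℕ)) := by
          simpa [Xval, Nat.even_add_one, Nat.not_odd_iff_even] using he
        exact iff_of_false (fun hc => absurd hlt (asymm hc)) hnodd
  set F : Finset (Fin n) := univ.filter (fun i => Odd ((w i : ℕ))) with hF
  set D : Finset (Fin n × Fin n) :=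
    univ.filter (fun p => (p.1 : ℕ) + 1 = (p.2 : ℕ) ∧ π p.2 < π p.1) with hD
  set A : Finset (Fin n × Fin n) :=
    univ.filter (fun p => (p.1 : ℕ) + 1 = (p.2 : ℕ) ∧ w (π p.1) = w (π p.2)
      ∧ Odd ((w (π p.1) : ℕ))) with hA
  set C : Finset (Fin n × Fin n) :=
    univ.filter (fun p => (p.1 : ℕ) + 1 = (p.2 : ℕ) ∧ w (π p.1) < w (π p.2)) with hC
  have hdes : shelfDes m n w = D.card := rfl
  -- A ⊆ D
  have hAD : A ⊆ D := by
    intro p hp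
    simp only [hA, hD, mem_filter, mem_univ, true_and] at hp ⊢
    obtain ⟨h1, h2, h3⟩ := hp
    have hlt : p.1 < p.2 := by rw [Fin.lt_def]; omega
    exact ⟨h1, (hsame p.1 p.2 hlt h2).2 h3⟩
  -- D ⊆ A ∪ C
  have hDAC : D ⊆ A ∪ C := by
    intro p hp
    simp only [hD, mem_filter, mem_univ, true_and] at hp
    obtain ⟨h1, h2⟩ := hp
    have hlt : p.1 < p.2 := by rw [Fin.lt_def]; omega
    rcases lt_or_eq_of_le (hwle p.1 p.2 hlt.le) with h | h
    · exact Finset.mem_union_right _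
        (by simp only [hC, mem_filter, mem_univ, true_and]; exact ⟨h1, h⟩)
    · exact Finset.mem_union_left _
        (by simp only [hA, mem_filter, mem_univ, true_and]
            exact ⟨h1, h, (hsame p.1 p.2 hlt h).1 h2⟩)
  have hADcard : A.card ≤ D.card := Finset.card_le_card hAD
  have hDcard : D.card ≤ A.card + C.card :=
    le_trans (Finset.card_le_card hDAC) (Finset.card_union_le _ _)
  -- C.card ≤ 2m - 1
  have hCcard : C.card ≤ 2 * m - 1 := by
    have h := Finset.card_le_card_of_injOn (fun p : Fin n × Fin n => (w (π p.2) : ℕ))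
      (s := C) (t := Finset.Ico 1 (2*m)) ?_ ?_
    · simpa using h
    · intro p hp
      simp only [Finset.mem_coe, hC, mem_filter, mem_univ, true_and] at hp
      obtain ⟨h1, h2⟩ := hp
      simp only [Finset.mem_coe, Finset.mem_Ico]
      rw [Fin.lt_def] at h2
      exact ⟨by omega, (w (π p.2)).isLt⟩
    · intro p hp q hq hpq
      simp only [Finset.mem_coe, hC, mem_filter, mem_univ, true_and] at hp hq
      obtain ⟨hp1, hp2⟩ := hp
      obtain ⟨hq1, hq2⟩ := hq
      simp only at hpq
      by_contra hne
      have h12 : (p.1 : ℕ) ≠ (q.1 : ℕ) := by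
        intro h
        exact hne (Prod.ext (Fin.ext h) (Fin.ext (by omega)))
      rcases Nat.lt_or_ge (p.1 : ℕ) (q.1 : ℕ) with h | h
      · have hle2 : p.2 ≤ q.1 := by rw [Fin.le_def]; omega
        have := hwle p.2 q.1 hle2
        rw [Fin.le_def] at this
        rw [Fin.lt_def] at hq2
        omega
      · have h' : (q.1 : ℕ) < (p.1 : ℕ) := by omega
        have hle2 : q.2 ≤ p.1 := by rw [Fin.le_def]; omega
        have := hwle q.2 p.1 hle2
        rw [Fin.le_def] at this
        rw [Fin.lt_def] at hp2
        omega
  -- A.card ≤ F.card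
  have hAF : A.card ≤ F.card := by
    apply Finset.card_le_card_of_injOn (fun p : Fin n × Fin n => π p.2)
    · intro p hp
      simp only [Finset.mem_coe, hA, mem_filter, mem_univ, true_and] at hp
      obtain ⟨h1, h2, h3⟩ := hp
      simp only [Finset.mem_coe, hF, mem_filter, mem_univ, true_and]
      exact h2 ▸ h3
    · intro p hp q hq hpq
      simp only [Finset.mem_coe, hA, mem_filter, mem_univ, true_and] at hp hq
      simp only at hpq
      have h2 := π.injective hpq
      have h2' : (p.2 : ℕ) = (q.2 : ℕ) := congrArg Fin.val h2
      have e1 := hp.1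
      have e2 := hq.1
      exact Prod.ext (Fin.ext (by omega)) h2
  -- F.card ≤ A.card + m
  have hn0 : 0 < n ∨ F.card ≤ A.card + m := by
    rcases Nat.eq_zero_or_pos n with h | h
    · right
      subst h
      have hF0 : F.card = 0 := by simp [hF]
      omega
    · left; exact h
  have hFA : F.card ≤ A.card + m := by
    rcases hn0 with hn0 | hdone
    swap
    · exact hdone
    set pred : Fin n → Fin n := fun p => ⟨(p : ℕ) - 1, by omega⟩ with hpred
    set P : Fin n → Prop := fun i => ((π.symm i : ℕ) = 0 ∨ w (π (pred (π.symm i))) ≠ w i)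
      with hP
    have hsplit := Finset.card_filter_add_card_filter_not (s := F) (p := P)
    have hF1 : (F.filter P).card ≤ m := by
      have h := Finset.card_le_card_of_injOn (fun i => w i)
        (s := F.filter P) (t := univ.filter (fun v : Fin (2*m) => Odd (v:ℕ))) ?_ ?_
      · calc (F.filter P).card ≤ _ := h
          _ = m := card_odd_fin m
      · intro i hi
        simp only [Finset.mem_coe, mem_filter, hF, mem_univ, true_and] at hi ⊢
        exact hi.1
      · intro i hi j hj hij
        simp only [Finset.mem_coe, mem_filter, hF, mem_univ, true_and] at hi hj
        simp only at hij
        by_contra hne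
        have hpq : π.symm i ≠ π.symm j := fun h => hne (by
          have := congrArg π h; simpa using this)
        rcases Ne.lt_or_gt hpq with h | h
        · -- π.symm i < π.symm j : contradict P j
          have hq0 : (π.symm j : ℕ) ≠ 0 := by
            rw [Fin.lt_def] at h; omega
          have hle1 : π.symm i ≤ pred (π.symm j) := by
            rw [Fin.le_def]; rw [Fin.lt_def] at h; simp only [hpred]; omega
          have hle2 : pred (π.symm j) ≤ π.symm j := by
            rw [Fin.le_def]; simp only [hpred]; omega
          have ha := hwle _ _ hle1
          have hb := hwle _ _ hle2
          rw [Equiv.apply_symm_apply] at ha hb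
          have heqw : w (π (pred (π.symm j))) = w j :=
            le_antisymm hb (hij ▸ ha)
          rcases hj.2 with h' | h'
          · exact hq0 h'
          · exact h' heqw
        · have hq0 : (π.symm i : ℕ) ≠ 0 := by
            rw [Fin.lt_def] at h; omega
          have hle1 : π.symm j ≤ pred (π.symm i) := by
            rw [Fin.le_def]; rw [Fin.lt_def] at h; simp only [hpred]; omega
          have hle2 : pred (π.symm i) ≤ π.symm i := by
            rw [Fin.le_def]; simp only [hpred]; omega
          have ha := hwle _ _ hle1
          have hb := hwle _ _ hle2
          rw [Equiv.apply_symm_apply] at ha hb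
          have heqw : w (π (pred (π.symm i))) = w i :=
            le_antisymm hb (hij ▸ ha)
          rcases hi.2 with h' | h'
          · exact hq0 h'
          · exact h' heqw
    have hF2 : (F.filter (fun i => ¬ P i)).card ≤ A.card := by
      apply Finset.card_le_card_of_injOn (fun i => (pred (π.symm i), π.symm i))
      · intro i hi
        simp only [Finset.mem_coe, mem_filter, hF, mem_univ, true_and, hP] at hi
        obtain ⟨hodd, hnp⟩ := hi
        push_neg at hnp
        obtain ⟨hq0, heqw⟩ := hnp
        simp only [Finset.mem_coe, hA, mem_filter, mem_univ, true_and]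
        refine ⟨?_, ?_, ?_⟩
        · show ((π.symm i : ℕ) - 1) + 1 = ((π.symm i : ℕ))
          omega
        · rw [Equiv.apply_symm_apply]; exact heqw
        · rw [heqw]; exact hodd
      · intro i hi j hj hij
        have := congrArg Prod.snd hij
        simp only at this
        have := congrArg π this
        simpa using this
    omega
  -- conclude
  rw [hdes, abs_le]
  constructor <;> push_cast <;> omega

/-- For `n ≥ 1`, `m ≥ 1`, there exists on the same probability space
(the space of uniform pile-assignment words) a random variable `B_{n,m}` with the
`Binomial(n, 1/2)` distribution such that `|d_{n,m} − B_{n,m}| ≤ 4m − 1` almost surely. -/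
theorem descents_binomial_coupling (n m : ℕ) (hn : 1 ≤ n) (hm : 1 ≤ m) :
    ∃ B : (Fin n → Fin (2*m)) → ℕ,
      (∀ k : ℕ, (uniformM (Fin n → Fin (2*m))) {w | B w = k}
          = (n.choose k : ENNReal) * (1/2)^n) ∧
      (∀ᵐ w ∂(uniformM (Fin n → Fin (2*m))),
        |(shelfDes m n w : ℤ) - (B w : ℤ)| ≤ 4 * (m : ℤ) - 1) := by
  classical
  refine ⟨fun w => ((univ : Finset (Fin n)).filter (fun i => Odd ((w i : ℕ)))).card, ?_, ?_⟩
  · intro k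
    have hset : {w : Fin n → Fin (2*m) |
        ((univ : Finset (Fin n)).filter (fun i => Odd ((w i : ℕ)))).card = k}
        = ↑((univ : Finset (Fin n → Fin (2*m))).filter
          (fun w => ((univ : Finset (Fin n)).filter (fun i => Odd ((w i : ℕ)))).card = k)) := by
      ext w; simp
    rw [uniformM, hset, Measure.smul_apply, smul_eq_mul, Measure.count_apply_finset,
      count_words n m k]
    have hcard : (Fintype.card (Fin n → Fin (2*m)) : ENNReal) = 2^n * (m : ENNReal)^n := by
      rw [Fintype.card_fun]
      push_cast
      simp [mul_pow]
    rw [hcard]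
    have hm0 : (m : ENNReal)^n ≠ 0 := pow_ne_zero _ (by
      simp only [ne_eq, Nat.cast_eq_zero]; omega)
    have hmtop : (m : ENNReal)^n ≠ ⊤ := ENNReal.pow_ne_top (ENNReal.natCast_ne_top m)
    rw [ENNReal.mul_inv (Or.inl (by positivity)) (Or.inl (ENNReal.pow_ne_top (ENNReal.ofNat_ne_top (n := 2))))]
    push_cast
    rw [show ((1:ENNReal)/2)^n = (2^n)⁻¹ by rw [one_div, ← ENNReal.inv_pow]]
    calc (2^n : ENNReal)⁻¹ * ((m:ENNReal)^n)⁻¹ * ((n.choose k : ENNReal) * (m:ENNReal)^n)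
        = (n.choose k : ENNReal) * (2^n)⁻¹ * (((m:ENNReal)^n)⁻¹ * (m:ENNReal)^n) := by ring
      _ = (n.choose k : ENNReal) * (2^n)⁻¹ := by
          rw [ENNReal.inv_mul_cancel hm0 hmtop, mul_one]
  · exact ae_of_all _ (fun w => shelf_des_close m n hm w)
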